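/- arXiv:0705.1023 — 5 statements merged into one kernel-verified Lean document; each statement's English description precedes it below -/
import Mathlib

section
/- Let F, G be closed subspaces of a Hilbert space with ‖P_F − P_G‖ < 1. Then ‖P_F P_{G⊥}‖ = ‖P_G P_{F⊥}‖ = ‖P_F − P_G‖. -/
section ring
variable {R : Type*} [Ring R] {p q : R}

lemma idem_simp (hp : p*p = p) (x : R) : p*(p*x) = p*x := by rw [← mul_assoc, hp]

variable (hp : p*p = p) (hq : q*q = q)
include hp hq

lemma ringD : (p-q)*(p-q) = p + q - p*q - q*p := by
  simp only [mul_sub, sub_mul, hp, hq]; abel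

lemma ringPD : Commute ((p-q)*(p-q)) p := by
  unfold Commute SemiconjBy
  simp only [ringD hp hq, mul_sub, sub_mul, mul_add, add_mul, mul_assoc, hp, hq,
    idem_simp hp, idem_simp hq]
  abel

lemma ringPDP : p*((p-q)*(p-q))*p = (p*(1-q))*((1-q)*p) := by
  simp only [ringD hp hq, mul_sub, sub_mul, mul_add, add_mul, mul_one, one_mul, mul_assoc, hp, hq,
    idem_simp hp, idem_simp hq]
  abel

lemma ringPcDPc : (1-p)*((p-q)*(p-q))*(1-p) = ((1-p)*q)*(q*(1-p)) := by
  simp only [ringD hp hq, mul_sub, sub_mul, mul_add, add_mul, mul_one, one_mul, mul_assoc, hp, hq,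
    idem_simp hp, idem_simp hq]
  abel

lemma ringA1 : p*(1-q) = p*(p-q)*(1-q) := by
  simp only [mul_sub, sub_mul, mul_one, one_mul, mul_assoc, hp, hq, idem_simp hp, idem_simp hq]
  abel

lemma ringAQ : (p*q + (1-p)*(1-q))*q = p*(p*q + (1-p)*(1-q)) := by
  simp only [mul_sub, sub_mul, mul_add, add_mul, mul_one, one_mul, mul_assoc, hp, hq,
    idem_simp hp, idem_simp hq]
  abel

lemma ringAstarA : (q*p + (1-q)*(1-p))*(p*q + (1-p)*(1-q)) = 1 - (p-q)*(p-q) := by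
  simp only [ringD hp hq, mul_sub, sub_mul, mul_add, add_mul, mul_one, one_mul, mul_assoc, hp, hq,
    idem_simp hp, idem_simp hq]
  abel

lemma ringAAstar : (p*q + (1-p)*(1-q))*(q*p + (1-q)*(1-p)) = 1 - (p-q)*(p-q) := by
  simp only [ringD hp hq, mul_sub, sub_mul, mul_add, add_mul, mul_one, one_mul, mul_assoc, hp, hq,
    idem_simp hp, idem_simp hq]
  abel

lemma ringDA : Commute ((p-q)*(p-q)) (p*q + (1-p)*(1-q)) := by
  unfold Commute SemiconjBy
  simp only [ringD hp hq, mul_sub, sub_mul, mul_add, add_mul, mul_one, one_mul, mul_assoc, hp, hq,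
    idem_simp hp, idem_simp hq]
  abel
end ring

lemma comm_idem_absorb {S : Type*} [Ring S] {r e : S} (hdp : Commute e r) (hr : r*r = r) :
    r * e = r * e * r := by
  rw [mul_assoc, hdp.eq, ← mul_assoc, hr]

lemma comm_idem_absorb2 {S : Type*} [Ring S] {r e : S} (hdp : Commute e r) (hr : r*r = r) :
    r * e * r * r = r * e := by
  rw [mul_assoc (r*e), hr, ← comm_idem_absorb hdp hr]

open ContinuousLinearMap
variable {H : Type*} [NormedAddCommGroup H] [InnerProductSpace ℂ H] [CompleteSpace H]

/-- The orthogonal projection onto a closed subspace, as an operator on `H`. -/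
noncomputable def projOf (F : Submodule ℂ H) [CompleteSpace F] : H →L[ℂ] H :=
  F.subtypeL ∘L F.orthogonalProjectionOnto

lemma projOf_compl (F : Submodule ℂ H) [CompleteSpace F] : projOf Fᗮ = 1 - projOf F := by
  ext x
  have h : F.subtypeL (F.orthogonalProjectionOnto x) + Fᗮ.subtypeL (Fᗮ.orthogonalProjectionOnto x) = x :=
    F.starProjection_add_starProjection_orthogonal x
  simp only [projOf, ContinuousLinearMap.sub_apply, ContinuousLinearMap.one_apply,
    ContinuousLinearMap.comp_apply, Submodule.subtypeL_apply] at *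
  rw [eq_sub_iff_add_eq, add_comm]
  exact h

lemma projOf_pyth (F : Submodule ℂ H) [CompleteSpace F] (x : H) :
    ‖projOf F x‖^2 + ‖(1 - projOf F) x‖^2 = ‖x‖^2 := by
  rw [← projOf_compl]
  have := Submodule.norm_sq_eq_add_norm_sq_projection x F
  simp only [projOf, ContinuousLinearMap.comp_apply, Submodule.subtypeL_apply]
  rw [Submodule.norm_coe, Submodule.norm_coe]
  linarith

lemma projOf_idem (F : Submodule ℂ H) [CompleteSpace F] : projOf F * projOf F = projOf F := by
  exact F.isIdempotentElem_starProjection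

lemma projOf_sa (F : Submodule ℂ H) [CompleteSpace F] : IsSelfAdjoint (projOf F) :=
  isSelfAdjoint_starProjection F

lemma projOf_norm_le (F : Submodule ℂ H) [CompleteSpace F] : ‖projOf F‖ ≤ 1 := by
  refine opNorm_le_bound _ zero_le_one fun x => ?_
  rw [one_mul]
  have h := projOf_pyth F x
  nlinarith [norm_nonneg (projOf F x), norm_nonneg ((1 - projOf F) x), norm_nonneg x]

theorem norms_eq_gap_of_gap_lt_one (F G : Submodule ℂ H)
    [CompleteSpace F] [CompleteSpace G] (h : ‖projOf F - projOf G‖ < 1) :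
    ‖projOf F * projOf Gᗮ‖ = ‖projOf F - projOf G‖ ∧
      ‖projOf G * projOf Fᗮ‖ = ‖projOf F - projOf G‖ := by
  rw [projOf_compl, projOf_compl]
  set P := projOf F with hPdef
  set Q := projOf G with hQdef
  have hP : P * P = P := projOf_idem F
  have hQ : Q * Q = Q := projOf_idem G
  have sP : IsSelfAdjoint P := projOf_sa F
  have sQ : IsSelfAdjoint Q := projOf_sa G
  have nP : ‖P‖ ≤ 1 := projOf_norm_le F
  have nQ' : ‖1 - Q‖ ≤ 1 := by rw [← projOf_compl]; exact projOf_norm_le Gᗮ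
  have nP' : ‖1 - P‖ ≤ 1 := by rw [← projOf_compl]; exact projOf_norm_le Fᗮ
  have nQ : ‖Q‖ ≤ 1 := projOf_norm_le G
  set D : H →L[ℂ] H := (P - Q) * (P - Q) with hDdef
  set c := ‖P - Q‖ with hcdef
  have hc0 : (0:ℝ) ≤ c := norm_nonneg _
  -- a ≤ c and b ≤ c
  have ha_le : ‖P * (1 - Q)‖ ≤ c := by
    rw [ringA1 hP hQ]
    calc ‖P * (P - Q) * (1 - Q)‖ ≤ ‖P * (P - Q)‖ * ‖1 - Q‖ := norm_mul_le _ _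
      _ ≤ ‖P‖ * ‖P - Q‖ * ‖1 - Q‖ := by
          gcongr; exact norm_mul_le _ _
      _ ≤ 1 * c * 1 := by gcongr <;> simp [hc0]
      _ = c := by ring
  have hb_le : ‖Q * (1 - P)‖ ≤ c := by
    have := ringA1 hQ hP
    rw [this]
    calc ‖Q * (Q - P) * (1 - P)‖ ≤ ‖Q * (Q - P)‖ * ‖1 - P‖ := norm_mul_le _ _
      _ ≤ ‖Q‖ * ‖Q - P‖ * ‖1 - P‖ := by gcongr; exact norm_mul_le _ _
      _ ≤ 1 * c * 1 := by
          rw [norm_sub_rev]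
          gcongr <;> simp [hc0]
      _ = c := by ring
  -- star facts
  have starPQ' : star (P * (1 - Q)) = (1 - Q) * P := by
    rw [star_mul]
    simp [star_sub, sP.star_eq, sQ.star_eq]
  have starQP' : star (Q * (1 - P)) = (1 - P) * Q := by
    rw [star_mul]
    simp [star_sub, sP.star_eq, sQ.star_eq]
  -- C* identities
  have hPDP : ‖P * D * P‖ = ‖P * (1 - Q)‖ * ‖P * (1 - Q)‖ := by
    rw [hDdef, ringPDP hP hQ, ← starPQ', CStarRing.norm_self_mul_star]
  have hQDQ : ‖Q * D * Q‖ = ‖Q * (1 - P)‖ * ‖Q * (1 - P)‖ := by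
    have h1 := ringPDP hQ hP
    have hD' : (Q - P) * (Q - P) = D := by rw [hDdef]; noncomm_ring
    rw [hD'] at h1
    rw [h1, ← starQP', CStarRing.norm_self_mul_star]
  have hPcDPc : ‖(1 - P) * D * (1 - P)‖ = ‖Q * (1 - P)‖ * ‖Q * (1 - P)‖ := by
    rw [hDdef, ringPcDPc hP hQ, ← starQP', CStarRing.norm_star_mul_self]
  -- selfadjointness
  have sPQsub : IsSelfAdjoint (P - Q) := sP.sub sQ
  have sD : IsSelfAdjoint D := by
    show star D = D
    simp only [hDdef, star_mul, star_sub, sP.star_eq, sQ.star_eq]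
  have sPDP : IsSelfAdjoint (P * D * P) := by
    show star _ = _
    simp only [hDdef, star_mul, star_sub, sP.star_eq, sQ.star_eq]
    noncomm_ring
  have sQDQ : IsSelfAdjoint (Q * D * Q) := by
    show star _ = _
    simp only [hDdef, star_mul, star_sub, sP.star_eq, sQ.star_eq]
    noncomm_ring
  -- ‖D‖ = c^2 < 1
  have hDnorm : ‖D‖ = c * c := by
    rw [hDdef]
    have h5 := CStarRing.norm_star_mul_self (x := P - Q)
    rw [sPQsub.star_eq] at h5
    exact h5
  have hDlt : ‖D‖ < 1 := by rw [hDnorm]; nlinarith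
  -- the invertible intertwiner
  set A : H →L[ℂ] H := P * Q + (1 - P) * (1 - Q) with hAdef
  set As : H →L[ℂ] H := Q * P + (1 - Q) * (1 - P) with hAsdef
  have hAsA : As * A = 1 - D := by rw [hAsdef, hAdef, hDdef]; exact ringAstarA hP hQ
  have hAAs : A * As = 1 - D := by rw [hAdef, hAsdef, hDdef]; exact ringAAstar hP hQ
  set u0 : (H →L[ℂ] H)ˣ := Units.oneSub D hDlt with hu0def
  have hu0val : (u0 : H →L[ℂ] H) = 1 - D := rfl
  have hDA : Commute D A := by rw [hDdef, hAdef]; exact ringDA hP hQ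
  have hAu0 : Commute A (u0 : H →L[ℂ] H) := by
    rw [hu0val]
    exact (Commute.one_right A).sub_right hDA.symm
  have hAu0inv : Commute A ((u0⁻¹ : (H →L[ℂ] H)ˣ) : H →L[ℂ] H) := hAu0.units_inv_right
  have huv1 : A * (As * ((u0⁻¹ : (H →L[ℂ] H)ˣ) : H →L[ℂ] H)) = 1 := by
    rw [← mul_assoc, hAAs, ← hu0val]; exact u0.mul_inv
  have huv2 : (As * ((u0⁻¹ : (H →L[ℂ] H)ˣ) : H →L[ℂ] H)) * A = 1 := by
    rw [mul_assoc, ← hAu0inv.eq, ← mul_assoc, hAsA, ← hu0val]; exact u0.mul_inv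
  set u : (H →L[ℂ] H)ˣ :=
    ⟨A, As * ((u0⁻¹ : (H →L[ℂ] H)ˣ) : H →L[ℂ] H), huv1, huv2⟩ with hudef
  have huval : (u : H →L[ℂ] H) = A := rfl
  -- conjugation identity
  have hAQ : A * Q = P * A := by rw [hAdef]; exact ringAQ hP hQ
  have hconj' : A * (Q * D * Q) = P * D * P * A := by
    rw [← mul_assoc, ← mul_assoc, hAQ, mul_assoc P A D, ← hDA.eq, ← mul_assoc P D A,
      mul_assoc (P*D) A Q, hAQ, ← mul_assoc]
  have hconj : (u : H →L[ℂ] H) * (Q * D * Q) * ((u⁻¹ : (H →L[ℂ] H)ˣ) : H →L[ℂ] H)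
      = P * D * P := by
    rw [Units.mul_inv_eq_iff_eq_mul]
    show A * (Q * D * Q) = P * D * P * A
    exact hconj'
  -- spectral radius ⇒ norms equal
  have hnn : ‖P * D * P‖₊ = ‖Q * D * Q‖₊ := by
    have h1 := sPDP.spectralRadius_eq_nnnorm
    have h2 := sQDQ.spectralRadius_eq_nnnorm
    have h3 : spectralRadius ℂ (P * D * P) = spectralRadius ℂ (Q * D * Q) := by
      rw [← hconj]
      unfold spectralRadius
      rw [spectrum.units_conjugate]
    have h4 := (h1.symm.trans h3).trans h2
    exact_mod_cast h4
  have hab : ‖P * (1 - Q)‖ = ‖Q * (1 - P)‖ := by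
    have h5 : ‖P * D * P‖ = ‖Q * D * Q‖ := by
      rw [← coe_nnnorm, ← coe_nnnorm, hnn]
    rw [hPDP, hQDQ] at h5
    exact (mul_self_inj (norm_nonneg _) (norm_nonneg _)).mp h5
  -- c ≤ a
  set a := ‖P * (1 - Q)‖ with hadef
  have ha0 : (0:ℝ) ≤ a := norm_nonneg _
  have hDP : Commute D P := by rw [hDdef]; exact ringPD hP hQ
  have hPc : (1 - P) * (1 - P) = 1 - P := by
    simp [mul_sub, sub_mul, hP]
  have hDPc : Commute D (1 - P) := (Commute.one_right D).sub_right hDP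
  have hDle : ‖D‖ ≤ a * a := by
    refine opNorm_le_bound _ (mul_nonneg ha0 ha0) fun x => ?_
    have split := (projOf_pyth F (D x)).symm
    rw [← hPdef] at split
    have e1 : P (D x) = (P * D * P) (P x) := by
      rw [← mul_apply_eq_comp, ← mul_apply_eq_comp, comm_idem_absorb2 hDP hP]
    have e2 : (1 - P) (D x) = ((1 - P) * D * (1 - P)) ((1 - P) x) := by
      rw [← mul_apply_eq_comp, ← mul_apply_eq_comp, comm_idem_absorb2 hDPc hPc]
    have b1 : ‖P (D x)‖ ≤ (a * a) * ‖P x‖ := by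
      rw [e1, ← hPDP]
      exact le_opNorm _ _
    have b2 : ‖(1 - P) (D x)‖ ≤ (a * a) * ‖(1 - P) x‖ := by
      rw [e2]
      calc ‖((1 - P) * D * (1 - P)) ((1 - P) x)‖ ≤ ‖(1 - P) * D * (1 - P)‖ * ‖(1 - P) x‖ :=
            le_opNorm _ _
        _ = (a * a) * ‖(1 - P) x‖ := by rw [hPcDPc, ← hab]
    have pyth2 := projOf_pyth F x
    rw [← hPdef] at pyth2
    have hDx : ‖D x‖^2 = ‖P (D x)‖^2 + ‖(1 - P) (D x)‖^2 := by
      have h6 := projOf_pyth F (D x)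
      rw [← hPdef] at h6
      linarith
    have s1 : ‖P (D x)‖^2 ≤ (a*a)^2 * ‖P x‖^2 := by
      calc ‖P (D x)‖^2 ≤ ((a*a) * ‖P x‖)^2 := pow_le_pow_left₀ (norm_nonneg _) b1 2
        _ = (a*a)^2 * ‖P x‖^2 := by ring
    have s2 : ‖(1 - P) (D x)‖^2 ≤ (a*a)^2 * ‖(1 - P) x‖^2 := by
      calc ‖(1 - P) (D x)‖^2 ≤ ((a*a) * ‖(1 - P) x‖)^2 := pow_le_pow_left₀ (norm_nonneg _) b2 2
        _ = (a*a)^2 * ‖(1 - P) x‖^2 := by ring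
    have hsq : ‖D x‖^2 ≤ ((a*a) * ‖x‖)^2 := by
      have e3 : (a*a)^2 * ‖P x‖^2 + (a*a)^2 * ‖(1 - P) x‖^2 = ((a*a) * ‖x‖)^2 := by
        have e4 : (a*a)^2 * ‖P x‖^2 + (a*a)^2 * ‖(1 - P) x‖^2
            = (a*a)^2 * (‖P x‖^2 + ‖(1 - P) x‖^2) := by ring
        rw [e4, pyth2]
        ring
      linarith [hDx, s1, s2]
    have h0 : (0:ℝ) ≤ (a * a) * ‖x‖ := by positivity
    exact (pow_le_pow_iff_left₀ (norm_nonneg _) h0 two_ne_zero).mp hsq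
  have hc_le_a : c ≤ a := by
    have h7 : c * c ≤ a * a := by rw [← hDnorm]; exact hDle
    rw [← sq, ← sq] at h7
    exact (pow_le_pow_iff_left₀ hc0 ha0 two_ne_zero).mp h7
  constructor
  · exact le_antisymm ha_le hc_le_a
  · rw [← hab]; exact le_antisymm (hab ▸ hb_le) hc_le_a
end

section
/- For closed subspaces F, G of a Hilbert space, the spectrum of P_F P_G equals the spectrum of P_F P_G P_F, and both are contained in [0,1]. -/
open ContinuousLinearMap

variable {H : Type*} [NormedAddCommGroup H] [InnerProductSpace ℂ H] [CompleteSpace H]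

lemma projOf_mem (F : Submodule ℂ H) [CompleteSpace F] (x : H) : projOf F x ∈ F := by
  simp [projOf]

lemma zero_mem_spectrum_of_range (F : Submodule ℂ H) [CompleteSpace F] (hF1 : F ≠ ⊤)
    (a : H →L[ℂ] H) (ha : ∀ x, a x ∈ F) : (0 : ℂ) ∈ spectrum ℂ a := by
  rw [spectrum.zero_mem_iff]
  intro h
  obtain ⟨u, hu⟩ := h
  apply hF1
  rw [Submodule.eq_top_iff']
  intro x
  have : a (((u⁻¹ : (H →L[ℂ] H)ˣ) : H →L[ℂ] H) x) = x := by
    have := congrArg (fun t : H →L[ℂ] H => t x) u.mul_inv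
    simpa [hu, mul_apply] using this
  simpa [this] using ha (((u⁻¹ : (H →L[ℂ] H)ˣ) : H →L[ℂ] H) x)

theorem spectrum_prod_eq_spectrum_sym (F G : Submodule ℂ H)
    [CompleteSpace F] [CompleteSpace G]
    (hF0 : F ≠ ⊥) (hF1 : F ≠ ⊤) (hG0 : G ≠ ⊥) (hG1 : G ≠ ⊤) :
    spectrum ℂ (projOf F * projOf G) = spectrum ℂ (projOf F * projOf G * projOf F) ∧
      spectrum ℂ (projOf F * projOf G) ⊆ Complex.ofReal '' Set.Icc (0 : ℝ) 1 := by
  have hnt : Nontrivial H := by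
    obtain ⟨x, hxF, hx0⟩ := F.ne_bot_iff.mp hF0
    exact ⟨x, 0, hx0⟩
  -- equality of spectra
  have hdiff : spectrum ℂ (projOf F * projOf G) \ {0} = spectrum ℂ (projOf F * projOf G * projOf F) \ {0} := by
    have := spectrum.nonzero_mul_comm (𝕜 := ℂ) (projOf F * projOf G) (projOf F)
    rw [show projOf F * (projOf F * projOf G) = projOf F * projOf G by rw [← mul_assoc, projOf_idem]] at this
    exact this.symm
  have h0l : (0 : ℂ) ∈ spectrum ℂ (projOf F * projOf G) :=
    zero_mem_spectrum_of_range F hF1 _ fun x => by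
      simpa [mul_apply] using projOf_mem F (projOf G x)
  have h0r : (0 : ℂ) ∈ spectrum ℂ (projOf F * projOf G * projOf F) :=
    zero_mem_spectrum_of_range F hF1 _ fun x => by
      simpa [mul_apply] using projOf_mem F (projOf G (projOf F x))
  have heq : spectrum ℂ (projOf F * projOf G) = spectrum ℂ (projOf F * projOf G * projOf F) := by
    ext z
    rcases eq_or_ne z 0 with rfl | hz
    · simp [h0l, h0r]
    · constructor
      · intro hmem
        have : z ∈ spectrum ℂ (projOf F * projOf G * projOf F) \ {0} := hdiff ▸ ⟨hmem, hz⟩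
        exact this.1
      · intro hmem
        have : z ∈ spectrum ℂ (projOf F * projOf G) \ {0} := hdiff ▸ ⟨hmem, hz⟩
        exact this.1
  refine ⟨heq, ?_⟩
  rw [heq]
  -- positivity: projOf F projOf G projOf F = star (projOf G projOf F) * (projOf G projOf F)
  have hstar : projOf F * projOf G * projOf F = star (projOf G * projOf F) * (projOf G * projOf F) := by
    rw [star_mul, (projOf_sa F).star_eq, (projOf_sa G).star_eq]
    calc projOf F * projOf G * projOf F
        = projOf F * (projOf G * projOf G) * projOf F := by rw [projOf_idem]
      _ = projOf F * projOf G * (projOf G * projOf F) := by simp only [mul_assoc]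
  have hpos : (0 : H →L[ℂ] H) ≤ projOf F * projOf G * projOf F := hstar ▸ star_mul_self_nonneg (projOf G * projOf F)
  have hsa : IsSelfAdjoint (projOf F * projOf G * projOf F) := hstar ▸ IsSelfAdjoint.star_mul_self (projOf G * projOf F)
  have hnorm : ‖projOf F * projOf G * projOf F‖ ≤ 1 := by
    calc ‖projOf F * projOf G * projOf F‖ ≤ ‖projOf F * projOf G‖ * ‖projOf F‖ := norm_mul_le _ _
      _ ≤ (‖projOf F‖ * ‖projOf G‖) * ‖projOf F‖ := by gcongr; exact norm_mul_le _ _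
      _ ≤ (1 * 1) * 1 := by
          gcongr <;> first | exact projOf_norm_le F | exact projOf_norm_le G
      _ = 1 := by norm_num
  intro z hz
  have hre : z = (z.re : ℂ) := hsa.mem_spectrum_eq_re hz
  have hmemR : z.re ∈ spectrum ℝ (projOf F * projOf G * projOf F) := by
    have := hsa.spectrumRestricts.apply_mem hz
    simpa using this
  have h0 : (0 : ℝ) ≤ z.re := spectrum_nonneg_of_nonneg hpos hmemR
  have h1 : ‖z‖ ≤ 1 := le_trans (spectrum.norm_le_norm_of_mem hz) hnorm
  refine ⟨z.re, ⟨h0, ?_⟩, hre.symm⟩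
  calc z.re ≤ |z.re| := le_abs_self _
    _ = ‖z‖ := by rw [hre]; simp
    _ ≤ 1 := h1
end

section
/- For orthogonal projectors P_F and P_G on a Hilbert space, a real number λ ∉ {−1, 0, 1} belongs to the spectrum of P_G − P_F if and only if 1 − λ² belongs to the spectrum of P_F P_G. -/
set_option maxHeartbeats 1000000

open ContinuousLinearMap
open scoped InnerProductSpace

variable {H : Type*} [NormedAddCommGroup H] [InnerProductSpace ℂ H] [CompleteSpace H]

namespace TwoProjAux

/-! ### Functional-analytic basics -/

lemma isUnit_of_bounded_below (T : H →L[ℂ] H) (hT : IsSelfAdjoint T) {c : ℝ} (hc : 0 < c)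
    (h : ∀ x, c * ‖x‖ ≤ ‖T x‖) : IsUnit T := by
  have hinj : LinearMap.ker (T : H →ₗ[ℂ] H) = ⊥ := by
    rw [LinearMap.ker_eq_bot']
    intro x hx
    have := h x
    rw [show T x = 0 from hx, norm_zero] at this
    have : ‖x‖ ≤ 0 := by nlinarith [norm_nonneg x]
    simpa [norm_le_zero_iff] using this
  have hanti : AntilipschitzWith ⟨c, hc.le⟩⁻¹ T := by
    apply T.antilipschitz_of_bound
    intro x
    have hK : ((⟨c, hc.le⟩⁻¹ : NNReal) : ℝ) = c⁻¹ := rfl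
    rw [hK, ← div_eq_inv_mul, le_div_iff₀ hc]
    linarith [h x]
  have hcl : IsClosed ((LinearMap.range (T : H →ₗ[ℂ] H) : Submodule ℂ H) : Set H) := by
    have := hanti.isClosed_range T.uniformContinuous
    convert this using 1
    exact LinearMap.coe_range _
  have hrange : LinearMap.range (T : H →ₗ[ℂ] H) = ⊤ := by
    haveI : CompleteSpace (LinearMap.range (T : H →ₗ[ℂ] H) : Submodule ℂ H) := hcl.completeSpace_coe
    rw [← Submodule.orthogonal_eq_bot_iff, Submodule.eq_bot_iff]
    intro y hy
    have hTy : T y = 0 := by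
      have h1 : ⟪T y, T y⟫_ℂ = 0 := by
        have h2 := (Submodule.mem_orthogonal _ y).mp hy (T (T y)) (LinearMap.mem_range_self _ _)
        calc ⟪T y, T y⟫_ℂ = ⟪(ContinuousLinearMap.adjoint T) (T y), y⟫_ℂ := by
              rw [ContinuousLinearMap.adjoint_inner_left]
        _ = ⟪T (T y), y⟫_ℂ := by rw [hT.adjoint_eq]
        _ = 0 := h2
      exact inner_self_eq_zero.mp h1
    have := h y
    rw [hTy, norm_zero] at this
    have : ‖y‖ ≤ 0 := by nlinarith [norm_nonneg y]
    simpa [norm_le_zero_iff] using this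
  let e := ContinuousLinearEquiv.ofBijective T hinj hrange
  have hTe : ∀ z, T z = e z := fun z => rfl
  refine ⟨⟨T, (e.symm : H →L[ℂ] H), ?_, ?_⟩, rfl⟩
  · ext x
    show T (e.symm x) = x
    rw [hTe]
    simp
  · ext x
    show e.symm (T x) = x
    rw [hTe]
    simp

omit [CompleteSpace H] in
lemma bounded_below_of_isUnit [Nontrivial H] {T : H →L[ℂ] H} (h : IsUnit T) :
    ∃ c : ℝ, 0 < c ∧ ∀ x, c * ‖x‖ ≤ ‖T x‖ := by
  obtain ⟨u, rfl⟩ := h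
  have hone : (1 : H →L[ℂ] H) ≠ 0 := by
    obtain ⟨x, y, hxy⟩ := exists_pair_ne H
    intro h1
    apply hxy
    have hx : (1 : H →L[ℂ] H) x = (0 : H →L[ℂ] H) x := by rw [h1]
    have hy : (1 : H →L[ℂ] H) y = (0 : H →L[ℂ] H) y := by rw [h1]
    simp only [ContinuousLinearMap.one_apply, ContinuousLinearMap.zero_apply] at hx hy
    rw [hx, hy]
  have hinv : (↑u⁻¹ : H →L[ℂ] H) ≠ 0 := by
    intro h0
    apply hone
    have := u.inv_mul
    rw [h0] at this
    simpa using this.symm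
  have hpos : 0 < ‖(↑u⁻¹ : H →L[ℂ] H)‖ := norm_pos_iff.mpr hinv
  refine ⟨‖(↑u⁻¹ : H →L[ℂ] H)‖⁻¹, inv_pos.mpr hpos, fun x => ?_⟩
  have hx : x = (↑u⁻¹ : H →L[ℂ] H) ((↑u : H →L[ℂ] H) x) := by
    rw [← ContinuousLinearMap.mul_apply, u.inv_mul, ContinuousLinearMap.one_apply]
  have hle : ‖x‖ ≤ ‖(↑u⁻¹ : H →L[ℂ] H)‖ * ‖(↑u : H →L[ℂ] H) x‖ := by
    conv_lhs => rw [hx]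
    exact le_opNorm _ _
  rw [inv_mul_le_iff₀ hpos]
  exact hle

/-! ### Inner-product facts -/

omit [CompleteSpace H] in
lemma inner_selfadj [CompleteSpace H] {T : H →L[ℂ] H} (hT : IsSelfAdjoint T) (x y : H) :
    ⟪T x, y⟫_ℂ = ⟪x, T y⟫_ℂ := by
  conv_lhs => rw [← hT.adjoint_eq]
  rw [ContinuousLinearMap.adjoint_inner_left]

lemma normsq_selfadj {T : H →L[ℂ] H} (hT : IsSelfAdjoint T) (x : H) :
    (⟪T (T x), x⟫_ℂ).re = ‖T x‖ ^ 2 := by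
  rw [inner_selfadj hT (T x) x]
  have := inner_self_eq_norm_sq (𝕜 := ℂ) (T x)
  simpa using this

lemma re_inner_idem {p : H →L[ℂ] H} (hp : IsSelfAdjoint p) (hp2 : p * p = p) (y : H) :
    (⟪p y, y⟫_ℂ).re = ‖p y‖ ^ 2 := by
  have h1 : p (p y) = p y := by
    rw [← ContinuousLinearMap.mul_apply, hp2]
  have := normsq_selfadj hp y
  rwa [h1] at this

lemma norm_apply_le {p : H →L[ℂ] H} (hp : IsSelfAdjoint p) (hp2 : p * p = p) (y : H) :
    ‖p y‖ ≤ ‖y‖ := by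
  have h1 := re_inner_idem hp hp2 y
  have h2 : ‖⟪p y, y⟫_ℂ‖ ≤ ‖p y‖ * ‖y‖ := norm_inner_le_norm _ _
  have h3 : (⟪p y, y⟫_ℂ).re ≤ ‖⟪p y, y⟫_ℂ‖ := Complex.re_le_norm _
  nlinarith [norm_nonneg (p y), norm_nonneg y]

lemma pyth {p : H →L[ℂ] H} (hp : IsSelfAdjoint p) (hp2 : p * p = p) (w : H) :
    ‖w‖ ^ 2 = ‖p w‖ ^ 2 + ‖w - p w‖ ^ 2 := by
  have horth : ⟪p w, w - p w⟫_ℂ = 0 := by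
    rw [inner_selfadj hp]
    have : p (w - p w) = 0 := by
      have : p (p w) = p w := by rw [← ContinuousLinearMap.mul_apply, hp2]
      simp [map_sub, this]
    rw [this, inner_zero_right]
  have := norm_add_sq (𝕜 := ℂ) (p w) (w - p w)
  simp only [horth, map_zero, mul_zero, add_zero] at this
  simpa using this

/-! ### Ring identities for idempotents -/

section RingIds

variable {R : Type*} [Ring R] {a b : R} (ha : a * a = a) (hb : b * b = b)

include ha hb

lemma rid_anticomm : (a + b - 1) * (b - a) + (b - a) * (a + b - 1) = 0 := by
  have h1 : ∀ x : R, a * (a * x) = a * x := fun x => by rw [← mul_assoc, ha]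
  have h2 : ∀ x : R, b * (b * x) = b * x := fun x => by rw [← mul_assoc, hb]
  simp only [mul_sub, sub_mul, mul_add, add_mul, mul_one, one_mul, mul_assoc, ha, hb, h1, h2]
  abel

lemma rid_dd_ss : (b - a) * (b - a) + (a + b - 1) * (a + b - 1) = 1 := by
  have h1 : ∀ x : R, a * (a * x) = a * x := fun x => by rw [← mul_assoc, ha]
  have h2 : ∀ x : R, b * (b * x) = b * x := fun x => by rw [← mul_assoc, hb]
  simp only [mul_sub, sub_mul, mul_add, add_mul, mul_one, one_mul, mul_assoc, ha, hb, h1, h2]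
  abel

lemma rid_a_comm_dd : a * ((b - a) * (b - a)) = ((b - a) * (b - a)) * a := by
  have h1 : ∀ x : R, a * (a * x) = a * x := fun x => by rw [← mul_assoc, ha]
  have h2 : ∀ x : R, b * (b * x) = b * x := fun x => by rw [← mul_assoc, hb]
  simp only [mul_sub, sub_mul, mul_assoc, ha, hb, h1, h2]
  abel

lemma rid_aba : a * b * a = a * (1 - (b - a) * (b - a)) := by
  have h1 : ∀ x : R, a * (a * x) = a * x := fun x => by rw [← mul_assoc, ha]
  have h2 : ∀ x : R, b * (b * x) = b * x := fun x => by rw [← mul_assoc, hb]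
  simp only [mul_sub, sub_mul, mul_one, mul_assoc, ha, hb, h1, h2]
  abel

lemma rid_sum : a * b * a + (1 - a) * (1 - b) * (1 - a) = 1 - (b - a) * (b - a) := by
  have h1 : ∀ x : R, a * (a * x) = a * x := fun x => by rw [← mul_assoc, ha]
  have h2 : ∀ x : R, b * (b * x) = b * x := fun x => by rw [← mul_assoc, hb]
  simp only [mul_sub, sub_mul, mul_add, add_mul, mul_one, one_mul, mul_assoc, ha, hb, h1, h2]
  abel

lemma rid_CC' : (a * b * a) * ((1 - a) * (1 - b) * (1 - a)) = 0 := by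
  have h1 : ∀ x : R, a * (a * x) = a * x := fun x => by rw [← mul_assoc, ha]
  have h2 : ∀ x : R, b * (b * x) = b * x := fun x => by rw [← mul_assoc, hb]
  simp only [mul_sub, sub_mul, mul_add, add_mul, mul_one, one_mul, mul_assoc, ha, hb, h1, h2]
  abel

lemma rid_C'C : ((1 - a) * (1 - b) * (1 - a)) * (a * b * a) = 0 := by
  have h1 : ∀ x : R, a * (a * x) = a * x := fun x => by rw [← mul_assoc, ha]
  have h2 : ∀ x : R, b * (b * x) = b * x := fun x => by rw [← mul_assoc, hb]
  simp only [mul_sub, sub_mul, mul_add, add_mul, mul_one, one_mul, mul_assoc, ha, hb, h1, h2]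
  abel

-- (1-a)*(b-a) = (1-a)*b
lemma rid_p'd : (1 - a) * (b - a) = (1 - a) * b := by
  have h1 : ∀ x : R, a * (a * x) = a * x := fun x => by rw [← mul_assoc, ha]
  have h2 : ∀ x : R, b * (b * x) = b * x := fun x => by rw [← mul_assoc, hb]
  simp only [mul_sub, sub_mul, mul_add, add_mul, mul_one, one_mul, mul_assoc, ha, hb, h1, h2]
  abel

-- (1-a)*b*(1-a) = (1-a) - (1-a)*(1-b)*(1-a)
lemma rid_p'qp' : (1 - a) * b * (1 - a) = (1 - a) - (1 - a) * (1 - b) * (1 - a) := by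
  have h1 : ∀ x : R, a * (a * x) = a * x := fun x => by rw [← mul_assoc, ha]
  have h2 : ∀ x : R, b * (b * x) = b * x := fun x => by rw [← mul_assoc, hb]
  simp only [mul_sub, sub_mul, mul_add, add_mul, mul_one, one_mul, mul_assoc, ha, hb, h1, h2]
  abel

omit hb in
-- a * ((1-a)*(1-b)*(1-a)) = 0
lemma rid_pC' : a * ((1 - a) * (1 - b) * (1 - a)) = 0 := by
  have h1 : ∀ x : R, a * (a * x) = a * x := fun x => by rw [← mul_assoc, ha]
  simp only [mul_sub, sub_mul, mul_add, add_mul, mul_one, one_mul, mul_assoc, ha, h1]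
  abel

end RingIds

/-! ### Algebra / spectrum combinators -/

section Alg
variable {R : Type*} [Ring R] [Algebra ℂ R]

omit [Algebra ℂ R] in
lemma isUnit_of_mul_comm {x y : R} (hcomm : x * y = y * x) (h : IsUnit (x * y)) : IsUnit x := by
  obtain ⟨u, hu⟩ := h
  have h2 : x * (y * ↑u⁻¹) = 1 := by rw [← mul_assoc, ← hu]; exact u.mul_inv
  have h1 : (↑u⁻¹ * y) * x = 1 := by rw [mul_assoc, ← hcomm, ← hu]; exact u.inv_mul
  have heq : (↑u⁻¹ * y : R) = y * ↑u⁻¹ := left_inv_eq_right_inv h1 h2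
  exact ⟨⟨x, y * ↑u⁻¹, h2, by rw [← heq]; exact h1⟩, rfl⟩

lemma prod_scalar (ν : ℂ) {x y : R} (hxy : x * y = 0) :
    (algebraMap ℂ R ν - x) * (algebraMap ℂ R ν - y)
      = algebraMap ℂ R ν * (algebraMap ℂ R ν - (x + y)) := by
  have hc : x * algebraMap ℂ R ν = algebraMap ℂ R ν * x := (Algebra.commutes ν x).symm
  rw [sub_mul, mul_sub, mul_sub, hxy, sub_zero, mul_sub, mul_add, hc]
  abel

lemma prod_scalar2 (z : ℂ) (d : R) :
    (algebraMap ℂ R z - d) * (algebraMap ℂ R (-z) - d)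
      = -(algebraMap ℂ R (z ^ 2) - d * d) := by
  have hc : d * algebraMap ℂ R z = algebraMap ℂ R z * d := (Algebra.commutes z d).symm
  rw [map_neg, pow_two, map_mul, sub_mul, mul_sub, mul_sub, mul_neg, mul_neg, hc]
  abel

lemma factors_comm (z : ℂ) (d : R) :
    (algebraMap ℂ R z - d) * (algebraMap ℂ R (-z) - d)
      = (algebraMap ℂ R (-z) - d) * (algebraMap ℂ R z - d) := by
  rw [prod_scalar2 z d]
  have := prod_scalar2 (-z) d
  rw [neg_neg, neg_sq] at this
  rw [this]

lemma isUnit_scalar_mul_iff {ν : ℂ} (hν : ν ≠ 0) (x : R) :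
    IsUnit (algebraMap ℂ R ν * x) ↔ IsUnit x := by
  have hu : IsUnit (algebraMap ℂ R ν) := (isUnit_iff_ne_zero.mpr hν).map (algebraMap ℂ R)
  constructor
  · intro h
    have h2 : x = algebraMap ℂ R ν⁻¹ * (algebraMap ℂ R ν * x) := by
      rw [← mul_assoc, ← map_mul, inv_mul_cancel₀ hν, map_one, one_mul]
    rw [h2]
    exact ((isUnit_iff_ne_zero.mpr (inv_ne_zero hν)).map (algebraMap ℂ R)).mul h
  · intro h
    exact hu.mul h

lemma mem_sq_iff (z : ℂ) (d : R) :
    z ^ 2 ∈ spectrum ℂ (d * d) ↔ (z ∈ spectrum ℂ d ∨ -z ∈ spectrum ℂ d) := by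
  rw [spectrum.mem_iff, spectrum.mem_iff, spectrum.mem_iff, ← not_and_or]
  have key : IsUnit (algebraMap ℂ R (z ^ 2) - d * d)
      ↔ (IsUnit (algebraMap ℂ R z - d) ∧ IsUnit (algebraMap ℂ R (-z) - d)) := by
    constructor
    · intro h
      have h' : IsUnit ((algebraMap ℂ R z - d) * (algebraMap ℂ R (-z) - d)) := by
        rw [prod_scalar2]
        exact h.neg
      refine ⟨isUnit_of_mul_comm (factors_comm z d) h', ?_⟩
      rw [factors_comm] at h'
      exact isUnit_of_mul_comm (factors_comm z d).symm h'
    · intro ⟨h1, h2⟩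
      have := h1.mul h2
      rw [prod_scalar2] at this
      exact (IsUnit.neg_iff _).mp this
  rw [not_iff_not.mpr key]

lemma spectrum_master {a b : R} (ha : a * a = a) (hb : b * b = b) {z ν : ℂ}
    (hν : ν = 1 - z ^ 2) (hν0 : ν ≠ 0) :
    (ν ∈ spectrum ℂ (a * b * a) ∨ ν ∈ spectrum ℂ ((1 - a) * (1 - b) * (1 - a)))
      ↔ z ^ 2 ∈ spectrum ℂ ((b - a) * (b - a)) := by
  set C := a * b * a with hC
  set C' := (1 - a) * (1 - b) * (1 - a) with hC'
  set d := b - a with hd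
  have hcc : C * C' = 0 := rid_CC' ha hb
  have hcc' : C' * C = 0 := rid_C'C ha hb
  have hsum : C + C' = 1 - d * d := rid_sum ha hb
  have hkey : algebraMap ℂ R ν - (1 - d * d) = -(algebraMap ℂ R (z ^ 2) - d * d) := by
    rw [hν, map_sub, map_one]
    abel
  have hprod1 : (algebraMap ℂ R ν - C) * (algebraMap ℂ R ν - C')
      = algebraMap ℂ R ν * -(algebraMap ℂ R (z ^ 2) - d * d) := by
    rw [prod_scalar ν hcc, hsum, hkey]
  have hprod2 : (algebraMap ℂ R ν - C') * (algebraMap ℂ R ν - C)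
      = algebraMap ℂ R ν * -(algebraMap ℂ R (z ^ 2) - d * d) := by
    rw [prod_scalar ν hcc', add_comm C' C, hsum, hkey]
  have hcomm : (algebraMap ℂ R ν - C) * (algebraMap ℂ R ν - C')
      = (algebraMap ℂ R ν - C') * (algebraMap ℂ R ν - C) := by rw [hprod1, hprod2]
  rw [spectrum.mem_iff, spectrum.mem_iff, spectrum.mem_iff, ← not_and_or]
  have key : IsUnit (algebraMap ℂ R (z ^ 2) - d * d)
      ↔ (IsUnit (algebraMap ℂ R ν - C) ∧ IsUnit (algebraMap ℂ R ν - C')) := by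
    constructor
    · intro h
      have h' : IsUnit ((algebraMap ℂ R ν - C) * (algebraMap ℂ R ν - C')) := by
        rw [hprod1, mul_neg]
        exact ((isUnit_scalar_mul_iff hν0 _).mpr h).neg
      exact ⟨isUnit_of_mul_comm hcomm h', by
        rw [hcomm] at h'
        exact isUnit_of_mul_comm hcomm.symm h'⟩
    · intro ⟨h1, h2⟩
      have := h1.mul h2
      rw [hprod1, mul_neg] at this
      exact (isUnit_scalar_mul_iff hν0 _).mp ((IsUnit.neg_iff _).mp this)
  rw [not_iff_not.mpr key.symm]

lemma mem_aba_iff_ab {a b : R} (ha : a * a = a) {ν : ℂ} (hν : ν ≠ 0) :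
    ν ∈ spectrum ℂ (a * b * a) ↔ ν ∈ spectrum ℂ (a * b) := by
  have h1 : ((Units.mk0 ν hν : ℂˣ) : ℂ) ∈ spectrum ℂ ((a * b) * a)
      ↔ ((Units.mk0 ν hν : ℂˣ) : ℂ) ∈ spectrum ℂ (a * (a * b)) :=
    spectrum.unit_mem_mul_comm
  have h2 : a * (a * b) = a * b := by rw [← mul_assoc, ha]
  simpa [h2] using h1

end Alg

/-! ### Real arithmetic for the transfer lemma -/

lemma real_combine {r e y w u c₀ ν : ℝ} (hr : 0 ≤ r) (he : 0 ≤ e) (hy : 0 ≤ y)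
    (hw : 0 ≤ w) (hu : 0 ≤ u) (hc : 0 < c₀) (h0 : 0 < ν) (h1 : ν < 1)
    (hyu : y ^ 2 = w ^ 2 - u ^ 2)
    (hwlb : (1 - ν) * r ^ 2 - (1 + 1/ν) * e * r ≤ w ^ 2)
    (huub : u ≤ (1 - ν) * r + (1 + 2/ν) * e)
    (F1 : y ≤ (1 + 1/ν) / c₀ * e) :
    min 1 (ν * (1 - ν) / ((1 + 1/ν) / c₀ * ((1 + 1/ν) / c₀) + (1 + 1/ν) + 2 * (1 + 2/ν)
      + (1 + 2/ν) * (1 + 2/ν))) * r ≤ e := by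
  set A := 1 + 1/ν with hA
  set B := 1 + 2/ν with hB
  set G := (1 + 1/ν) / c₀ with hG
  set X := 1 - ν with hX
  set M := G * G + A + 2 * B + B * B with hM
  have hApos : 0 < A := by rw [hA]; positivity
  have hBpos : 0 < B := by rw [hB]; positivity
  have hGpos : 0 < G := by rw [hG]; positivity
  have hXpos : 0 < X := by rw [hX]; linarith
  have hX1 : X < 1 := by rw [hX]; linarith
  have hMpos : 0 < M := by rw [hM]; positivity
  rcases le_or_gt r e with hre | hre
  · calc min 1 (ν * X / M) * r ≤ 1 * r :=
        mul_le_mul_of_nonneg_right (min_le_left _ _) hr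
    _ = r := one_mul r
    _ ≤ e := hre
  · rcases eq_or_lt_of_le hr with h | hrpos
    · rw [← h, mul_zero]; exact he
    · have hXrBe : 0 ≤ X * r + B * e := by positivity
      have hu2 : u ^ 2 ≤ (X * r + B * e) ^ 2 := by
        have := mul_le_mul huub huub hu hXrBe
        calc u ^ 2 = u * u := sq u
        _ ≤ (X * r + B * e) * (X * r + B * e) := this
        _ = (X * r + B * e) ^ 2 := (sq _).symm
      have hy2 : y ^ 2 ≤ G ^ 2 * e ^ 2 := by
        have hGe : 0 ≤ G * e := by positivity
        have := mul_le_mul F1 F1 hy hGe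
        calc y ^ 2 = y * y := sq y
        _ ≤ (G * e) * (G * e) := this
        _ = G ^ 2 * e ^ 2 := by ring
      have step1 : X * r ^ 2 - A * e * r ≤ G ^ 2 * e ^ 2 + (X * r + B * e) ^ 2 := by
        have : w ^ 2 = y ^ 2 + u ^ 2 := by linarith [hyu]
        linarith [hwlb, hy2, hu2]
      have expand : (X * r + B * e) ^ 2 = X ^ 2 * r ^ 2 + 2 * X * B * (e * r) + B ^ 2 * e ^ 2 := by
        ring
      have step2 : X * (1 - X) * r ^ 2
          ≤ A * (e * r) + 2 * X * B * (e * r) + B ^ 2 * e ^ 2 + G ^ 2 * e ^ 2 := by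
        have hXsq : X * r ^ 2 - X ^ 2 * r ^ 2 = X * (1 - X) * r ^ 2 := by ring
        have hAer : A * e * r = A * (e * r) := by ring
        linarith [step1, expand]
      have hee : e * e ≤ e * r := mul_le_mul_of_nonneg_left hre.le he
      have he2 : e ^ 2 ≤ e * r := by rw [sq]; exact hee
      have t1 : 2 * X * B * (e * r) ≤ 2 * B * (e * r) := by
        have her : 0 ≤ e * r := mul_nonneg he hr
        have : 2 * X * B ≤ 2 * B := by nlinarith
        exact mul_le_mul_of_nonneg_right this her
      have t2 : B ^ 2 * e ^ 2 ≤ B * B * (e * r) := by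
        have hBB : B ^ 2 = B * B := sq B
        rw [hBB]
        exact mul_le_mul_of_nonneg_left he2 (by positivity)
      have t3 : G ^ 2 * e ^ 2 ≤ G * G * (e * r) := by
        have hGG : G ^ 2 = G * G := sq G
        rw [hGG]
        exact mul_le_mul_of_nonneg_left he2 (by positivity)
      have key : X * (1 - X) * r ^ 2 ≤ M * (e * r) := by
        have hMer : M * (e * r)
            = A * (e * r) + 2 * B * (e * r) + B * B * (e * r) + G * G * (e * r) := by
          rw [hM]; ring
        linarith [step2, t1, t2, t3]
      have hXnu : X * (1 - X) = ν * X := by rw [hX]; ring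
      have hMe : ν * X * r ≤ M * e := by
        have hkey' : ν * X * r * r ≤ M * e * r := by
          have h1' : ν * X * r * r = X * (1 - X) * r ^ 2 := by rw [hXnu]; ring
          have h2' : M * (e * r) = M * e * r := by ring
          linarith [key]
        exact le_of_mul_le_mul_right hkey' hrpos
      calc min 1 (ν * X / M) * r ≤ ν * X / M * r :=
          mul_le_mul_of_nonneg_right (min_le_right _ _) hr
      _ ≤ e := by
          rw [div_mul_eq_mul_div, div_le_iff₀ hMpos]
          calc ν * X * r ≤ M * e := hMe
          _ = e * M := mul_comm M e

lemma scalar_selfadj (w : ℝ) :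
    IsSelfAdjoint (algebraMap ℂ (H →L[ℂ] H) ((w : ℝ) : ℂ)) := by
  have hw : IsSelfAdjoint ((w : ℂ)) := by
    rw [IsSelfAdjoint, Complex.star_def, Complex.conj_ofReal]
  rw [Algebra.algebraMap_eq_smul_one]
  exact hw.smul (IsSelfAdjoint.one (H →L[ℂ] H))

omit [CompleteSpace H] in
lemma scalar_apply (w : ℂ) (x : H) : (algebraMap ℂ (H →L[ℂ] H) w) x = w • x := by
  rw [Algebra.algebraMap_eq_smul_one]
  simp

lemma norm_identity {a b : H →L[ℂ] H} (ha2 : a * a = a) (hb2 : b * b = b)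
    (hsa : IsSelfAdjoint a) (hsb : IsSelfAdjoint b) (x : H) :
    ‖(b - a) x‖ ^ 2 + ‖(a + b - 1) x‖ ^ 2 = ‖x‖ ^ 2 := by
  set d := b - a with hd
  set s := a + b - 1 with hs
  have hsd : IsSelfAdjoint d := hsb.sub hsa
  have hss : IsSelfAdjoint s := (hsa.add hsb).sub (IsSelfAdjoint.one _)
  have hdd : d (d x) + s (s x) = x := by
    have h0 := congrArg (fun (T : H →L[ℂ] H) => T x) (rid_dd_ss ha2 hb2)
    simp only [ContinuousLinearMap.add_apply, ContinuousLinearMap.mul_apply,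
      ContinuousLinearMap.one_apply] at h0
    exact h0
  have h1 := normsq_selfadj hsd x
  have h2 := normsq_selfadj hss x
  have h3 : ⟪d (d x), x⟫_ℂ + ⟪s (s x), x⟫_ℂ = ⟪x, x⟫_ℂ := by
    rw [← inner_add_left, hdd]
  have h4 : (⟪x, x⟫_ℂ).re = ‖x‖ ^ 2 := by simpa using inner_self_eq_norm_sq (𝕜 := ℂ) x
  calc ‖d x‖ ^ 2 + ‖s x‖ ^ 2 = (⟪d (d x), x⟫_ℂ).re + (⟪s (s x), x⟫_ℂ).re := by rw [h1, h2]
  _ = ((⟪d (d x), x⟫_ℂ) + ⟪s (s x), x⟫_ℂ).re := (Complex.add_re _ _).symm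
  _ = (⟪x, x⟫_ℂ).re := by rw [h3]
  _ = ‖x‖ ^ 2 := h4

lemma sym_lemma [Nontrivial H] (a b : H →L[ℂ] H) (ha2 : a * a = a) (hb2 : b * b = b)
    (hsa : IsSelfAdjoint a) (hsb : IsSelfAdjoint b) (z : ℝ) (hz : z ^ 2 < 1)
    (h : IsUnit (algebraMap ℂ (H →L[ℂ] H) (-(z : ℂ)) - (b - a))) :
    IsUnit (algebraMap ℂ (H →L[ℂ] H) ((z : ℝ) : ℂ) - (b - a)) := by
  obtain ⟨c₀, hc₀, hbel⟩ := bounded_below_of_isUnit h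
  set d := b - a with hd
  set s := a + b - 1 with hs
  have hsd : IsSelfAdjoint d := hsb.sub hsa
  have hzabs : |z| ≤ 1 := by nlinarith [abs_nonneg z, sq_abs z]
  have hnorms : ∀ x : H, ‖s x‖ ≤ ‖x‖ := by
    intro x
    nlinarith [norm_identity ha2 hb2 hsa hsb x, norm_nonneg (s x), norm_nonneg x,
      sq_nonneg (‖(b - a) x‖)]
  have hnormd : ∀ x : H, ‖d x‖ ≤ ‖x‖ := by
    intro x
    nlinarith [norm_identity ha2 hb2 hsa hsb x, norm_nonneg (d x), norm_nonneg x,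
      sq_nonneg (‖(a + b - 1) x‖)]
  set T := algebraMap ℂ (H →L[ℂ] H) ((z : ℝ) : ℂ) - d with hT
  set T' := algebraMap ℂ (H →L[ℂ] H) (-(z : ℂ)) - d with hT'
  have hTsa : IsSelfAdjoint T := (scalar_selfadj z).sub hsd
  -- operator anticommutation : s T = - T' s
  have hop : s * T + T' * s = 0 := by
    have expand : s * T + T' * s
        = (s * algebraMap ℂ (H →L[ℂ] H) ((z : ℝ) : ℂ)
            - algebraMap ℂ (H →L[ℂ] H) ((z : ℝ) : ℂ) * s)
          - ((a + b - 1) * (b - a) + (b - a) * (a + b - 1)) := by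
      rw [hT, hT', map_neg, hd, hs]
      noncomm_ring
    rw [expand, ← Algebra.commutes (((z : ℝ) : ℂ)) s, rid_anticomm ha2 hb2]
    simp
  have hpt : ∀ x : H, T' (s x) = -(s (T x)) := by
    intro x
    have h0 := congrArg (fun (A : H →L[ℂ] H) => A x) hop
    simp only [ContinuousLinearMap.add_apply, ContinuousLinearMap.mul_apply,
      ContinuousLinearMap.zero_apply] at h0
    exact eq_neg_of_add_eq_zero_right h0
  -- (1) : c₀ * ‖s x‖ ≤ ‖T x‖
  have est1 : ∀ x : H, c₀ * ‖s x‖ ≤ ‖T x‖ := by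
    intro x
    calc c₀ * ‖s x‖ ≤ ‖T' (s x)‖ := hbel (s x)
    _ = ‖s (T x)‖ := by rw [hpt x, norm_neg]
    _ ≤ ‖T x‖ := hnorms _
  -- (2) : ‖(z² - d²) x‖ ≤ 2 ‖T x‖
  have hTT : algebraMap ℂ (H →L[ℂ] H) (((z : ℝ) : ℂ) ^ 2) - d * d = -(T' * T) := by
    have h1 := prod_scalar2 (((z : ℝ) : ℂ)) d
    have h2 := factors_comm (((z : ℝ) : ℂ)) d
    rw [← hT, ← hT'] at h1 h2
    rw [← h2, h1, neg_neg]
  have hT'bound : ∀ y : H, ‖T' y‖ ≤ 2 * ‖y‖ := by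
    intro y
    have : T' y = (-(z : ℂ)) • y - d y := by
      rw [hT', ContinuousLinearMap.sub_apply, scalar_apply]
    rw [this]
    calc ‖(-(z : ℂ)) • y - d y‖ ≤ ‖(-(z : ℂ)) • y‖ + ‖d y‖ := norm_sub_le _ _
    _ = |z| * ‖y‖ + ‖d y‖ := by
        rw [norm_smul, norm_neg, Complex.norm_real, Real.norm_eq_abs]
    _ ≤ 1 * ‖y‖ + ‖y‖ := by
        have := hnormd y
        have := norm_nonneg y
        nlinarith
    _ = 2 * ‖y‖ := by ring
  have est2 : ∀ x : H, ‖(algebraMap ℂ (H →L[ℂ] H) (((z : ℝ) : ℂ) ^ 2) - d * d) x‖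
      ≤ 2 * ‖T x‖ := by
    intro x
    have happ : (algebraMap ℂ (H →L[ℂ] H) (((z : ℝ) : ℂ) ^ 2) - d * d) x = -(T' (T x)) := by
      rw [hTT]
      simp [ContinuousLinearMap.mul_apply]
    rw [happ, norm_neg]
    exact hT'bound (T x)
  -- (3)
  have est3 : ∀ x : H, (1 - z ^ 2) * ‖x‖ ≤ 2 * ‖T x‖ + ‖s x‖ := by
    intro x
    have hopid : algebraMap ℂ (H →L[ℂ] H) ((1 : ℂ) - ((z : ℝ) : ℂ) ^ 2)
        = s * s - (algebraMap ℂ (H →L[ℂ] H) (((z : ℝ) : ℂ) ^ 2) - d * d) := by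
      rw [map_sub, map_one]
      have := rid_dd_ss ha2 hb2
      rw [← hd, ← hs] at this
      rw [← this]
      abel
    have happ : (algebraMap ℂ (H →L[ℂ] H) ((1 : ℂ) - ((z : ℝ) : ℂ) ^ 2)) x
        = s (s x) - (algebraMap ℂ (H →L[ℂ] H) (((z : ℝ) : ℂ) ^ 2) - d * d) x := by
      rw [hopid]; rfl
    have hnormval : ‖(algebraMap ℂ (H →L[ℂ] H) ((1 : ℂ) - ((z : ℝ) : ℂ) ^ 2)) x‖
        = (1 - z ^ 2) * ‖x‖ := by
      rw [scalar_apply, norm_smul]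
      congr 1
      have hcast : ((1 : ℂ) - ((z : ℝ) : ℂ) ^ 2) = (((1 - z ^ 2 : ℝ)) : ℂ) := by push_cast; ring
      rw [hcast, Complex.norm_real, Real.norm_eq_abs, abs_of_pos (by nlinarith : (0:ℝ) < 1 - z ^ 2)]
    calc (1 - z ^ 2) * ‖x‖ = ‖(algebraMap ℂ (H →L[ℂ] H) ((1 : ℂ) - ((z : ℝ) : ℂ) ^ 2)) x‖ :=
        hnormval.symm
    _ = ‖s (s x) - (algebraMap ℂ (H →L[ℂ] H) (((z : ℝ) : ℂ) ^ 2) - d * d) x‖ := by rw [happ]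
    _ ≤ ‖s (s x)‖ + ‖(algebraMap ℂ (H →L[ℂ] H) (((z : ℝ) : ℂ) ^ 2) - d * d) x‖ :=
        norm_sub_le _ _
    _ ≤ ‖s x‖ + 2 * ‖T x‖ := add_le_add (hnorms _) (est2 x)
    _ = 2 * ‖T x‖ + ‖s x‖ := by ring
  -- conclude
  apply isUnit_of_bounded_below T hTsa
    (c := (1 - z ^ 2) * c₀ / (2 * c₀ + 1))
    (div_pos (mul_pos (by nlinarith) hc₀) (by linarith))
  intro x
  rw [div_mul_eq_mul_div, div_le_iff₀ (by linarith : (0 : ℝ) < 2 * c₀ + 1)]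
  have h1 := est1 x
  have h2 := est3 x
  have h3 : c₀ * ((1 - z ^ 2) * ‖x‖) ≤ c₀ * (2 * ‖T x‖ + ‖s x‖) :=
    mul_le_mul_of_nonneg_left h2 hc₀.le
  nlinarith [norm_nonneg (T x), norm_nonneg (s x), norm_nonneg x]

lemma transfer_lemma [Nontrivial H] (a b : H →L[ℂ] H) (ha2 : a * a = a) (hb2 : b * b = b)
    (hsa : IsSelfAdjoint a) (hsb : IsSelfAdjoint b) (ν : ℝ) (h0 : 0 < ν) (h1 : ν < 1)
    (h : IsUnit (algebraMap ℂ (H →L[ℂ] H) ((ν : ℝ) : ℂ) - a * b * a)) :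
    IsUnit (algebraMap ℂ (H →L[ℂ] H) ((ν : ℝ) : ℂ) - (1 - a) * (1 - b) * (1 - a)) := by
  obtain ⟨c₀, hc₀, hbel⟩ := bounded_below_of_isUnit h
  set d := b - a with hd
  set s := a + b - 1 with hs
  set C := a * b * a with hC
  set C' := (1 - a) * (1 - b) * (1 - a) with hC'
  set Eop := 1 - d * d with hEop
  set Z := algebraMap ℂ (H →L[ℂ] H) ((ν : ℝ) : ℂ) with hZ
  have hsd : IsSelfAdjoint d := hsb.sub hsa
  have hsp' : IsSelfAdjoint (1 - a) := (IsSelfAdjoint.one _).sub hsa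
  have hsq' : IsSelfAdjoint (1 - b) := (IsSelfAdjoint.one _).sub hsb
  have hp'2 : (1 - a) * (1 - a) = 1 - a := by
    have h' : (1 - a) * (1 - a) = 1 - a - a + a * a := by noncomm_ring
    rw [h', ha2]; abel
  have hq'2 : (1 - b) * (1 - b) = 1 - b := by
    have h' : (1 - b) * (1 - b) = 1 - b - b + b * b := by noncomm_ring
    rw [h', hb2]; abel
  have hC'sa : IsSelfAdjoint C' := by
    have h' := hsq'.conjugate (1 - a)
    rwa [hsp'.star_eq] at h'
  have hTsa : IsSelfAdjoint (Z - C') := (scalar_selfadj ν).sub hC'sa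
  -- norms of pieces
  have hnorms : ∀ x : H, ‖s x‖ ≤ ‖x‖ := by
    intro x
    nlinarith [norm_identity ha2 hb2 hsa hsb x, norm_nonneg (s x), norm_nonneg x,
      sq_nonneg (‖(b - a) x‖)]
  have hnormd : ∀ x : H, ‖d x‖ ≤ ‖x‖ := by
    intro x
    nlinarith [norm_identity ha2 hb2 hsa hsb x, norm_nonneg (d x), norm_nonneg x,
      sq_nonneg (‖(a + b - 1) x‖)]
  have hEss : Eop = s * s := by
    have := rid_dd_ss ha2 hb2
    rw [← hd, ← hs] at this
    rw [hEop, ← this]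
    abel
  have hnormE : ∀ x : H, ‖Eop x‖ ≤ ‖x‖ := by
    intro x
    have : Eop x = s (s x) := by rw [hEss]; rfl
    rw [this]
    exact le_trans (hnorms _) (hnorms _)
  have hnorma : ∀ x : H, ‖a x‖ ≤ ‖x‖ := norm_apply_le hsa ha2
  have hnormp' : ∀ x : H, ‖(1 - a) x‖ ≤ ‖x‖ := norm_apply_le hsp' hp'2
  have hnormb : ∀ x : H, ‖b x‖ ≤ ‖x‖ := norm_apply_le hsb hb2
  -- operator identities
  have hEa : a * Eop = Eop * a := by
    have h' := rid_a_comm_dd ha2 hb2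
    rw [← hd] at h'
    have h2' : a * (1 - d * d) = a - a * (d * d) := by noncomm_ring
    have h3' : (1 - d * d) * a = a - d * d * a := by noncomm_ring
    rw [hEop, h2', h3', h']
  have hCE : C = a * Eop := by
    have h' := rid_aba ha2 hb2
    rw [← hd] at h'
    rw [hC, hEop, h']
  have hsum : C + C' = Eop := by
    have h' := rid_sum ha2 hb2
    rw [← hd] at h'
    rw [hC, hC', hEop, h']
  have hEd : Eop * d = d * Eop := by
    rw [hEop]; noncomm_ring
  have hCa : C * a = C := by
    rw [hCE, mul_assoc, ← hEa, ← mul_assoc, ha2]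
  -- scalar apply
  have hZapp : ∀ x : H, Z x = (ν : ℂ) • x := fun x => by rw [hZ, scalar_apply]
  -- now fix x
  apply isUnit_of_bounded_below (Z - C') hTsa
    (c := min 1 (ν * (1 - ν) / ((1 + 1/ν) / c₀ * ((1 + 1/ν) / c₀) + (1 + 1/ν) + 2 * (1 + 2/ν)
      + (1 + 2/ν) * (1 + 2/ν))))
    (lt_min one_pos (div_pos (mul_pos h0 (by linarith)) (by positivity)))
  intro x
  set e := ‖(Z - C') x‖ with he
  set r := ‖x‖ with hr
  -- (0) ν ‖a x‖ ≤ e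
  have est0 : ν * ‖a x‖ ≤ e := by
    have hop1 : a * (Z - C') = Z * a := by
      have hzero : a * C' = 0 := by
        have := rid_pC' ha2 (b := b)
        rw [← hC'] at this
        exact this
      rw [mul_sub, hzero, sub_zero, hZ, ← Algebra.commutes]
    have happ : a ((Z - C') x) = (ν : ℂ) • (a x) := by
      have := congrArg (fun (A : H →L[ℂ] H) => A x) hop1
      simp only [ContinuousLinearMap.mul_apply] at this
      rw [this, hZapp]
    calc ν * ‖a x‖ = ‖(ν : ℂ) • (a x)‖ := by
          rw [norm_smul, Complex.norm_real, Real.norm_eq_abs, abs_of_pos h0]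
    _ = ‖a ((Z - C') x)‖ := by rw [happ]
    _ ≤ e := hnorma _
  have est0' : ‖a x‖ ≤ e / ν := by
    rw [le_div_iff₀ h0]
    linarith [est0]
  have hee : 0 ≤ e := norm_nonneg _
  -- (2) ‖Eop x - ν • x‖ ≤ e + e/ν
  have est2 : ‖Eop x - (ν : ℂ) • x‖ ≤ e + e / ν := by
    have hExpand : Eop x = C x + C' x := by
      have := congrArg (fun (A : H →L[ℂ] H) => A x) hsum
      simp only [ContinuousLinearMap.add_apply] at this
      rw [← this]
    have hid : Eop x - (ν : ℂ) • x = C x - (Z - C') x := by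
      rw [hExpand]
      have : (Z - C') x = Z x - C' x := rfl
      rw [this, hZapp]
      abel
    rw [hid]
    have hCx : ‖C x‖ ≤ e / ν := by
      have : C x = Eop (a x) := by
        have := congrArg (fun (A : H →L[ℂ] H) => A x) (hCE.trans hEa)
        simp only [ContinuousLinearMap.mul_apply] at this
        exact this
      rw [this]
      exact le_trans (hnormE _) est0'
    calc ‖C x - (Z - C') x‖ ≤ ‖C x‖ + ‖(Z - C') x‖ := norm_sub_le _ _
    _ ≤ e / ν + e := add_le_add hCx le_rfl
    _ = e + e / ν := by ring
  -- y := a (d x)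
  set y := a (d x) with hy
  -- (3) ‖(Z - C) y‖ ≤ e + e/ν
  have est3 : ‖(Z - C) y‖ ≤ e + e / ν := by
    have hid3 : (Z - C) * (a * d) = (a * d) * (Z - Eop) := by
      have hCad : C * (a * d) = (a * d) * Eop := by
        rw [← mul_assoc, hCa, hCE, mul_assoc, hEd, ← mul_assoc]
      have hZad : Z * (a * d) = (a * d) * Z := by rw [hZ, ← Algebra.commutes]
      rw [sub_mul Z C (a * d), mul_sub (a * d) Z Eop, hCad, hZad]
    have happ3 : (Z - C) y = a (d ((Z - Eop) x)) := by
      have := congrArg (fun (A : H →L[ℂ] H) => A x) hid3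
      simp only [ContinuousLinearMap.mul_apply] at this
      rw [hy]
      exact this
    rw [happ3]
    calc ‖a (d ((Z - Eop) x))‖ ≤ ‖(Z - Eop) x‖ := le_trans (hnorma _) (hnormd _)
    _ = ‖Eop x - (ν : ℂ) • x‖ := by
        have : (Z - Eop) x = (ν : ℂ) • x - Eop x := by
          have : (Z - Eop) x = Z x - Eop x := rfl
          rw [this, hZapp]
        rw [this, norm_sub_rev]
    _ ≤ e + e / ν := est2
  -- (4) F1
  have hF1 : ‖y‖ ≤ (1 + 1/ν) / c₀ * e := by
    have h4 := le_trans (hbel y) est3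
    rw [div_mul_eq_mul_div, le_div_iff₀ hc₀]
    have : e + e / ν = (1 + 1/ν) * e := by ring
    calc ‖y‖ * c₀ = c₀ * ‖y‖ := mul_comm _ _
    _ ≤ e + e / ν := h4
    _ = (1 + 1/ν) * e := this
  -- (5a) lower bound on ‖d x‖²
  have est5a : (1 - ν) * r ^ 2 - (1 + 1/ν) * e * r ≤ ‖d x‖ ^ 2 := by
    have hdd : d (d x) = x - Eop x := by
      have : (d * d) x = d (d x) := rfl
      have h' : Eop x = x - (d * d) x := by
        rw [hEop]
        have : (1 - d * d) x = x - (d * d) x := rfl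
        rw [this]
      rw [← this]
      rw [h']
      abel
    have hnormsq := normsq_selfadj hsd x
    rw [hdd] at hnormsq
    have hinner : (⟪x - Eop x, x⟫_ℂ).re = r ^ 2 - (⟪Eop x, x⟫_ℂ).re := by
      rw [inner_sub_left, Complex.sub_re]
      congr 1
      simpa using inner_self_eq_norm_sq (𝕜 := ℂ) x
    have hupper : (⟪Eop x, x⟫_ℂ).re ≤ ν * r ^ 2 + (e + e / ν) * r := by
      have hsplit : ⟪Eop x, x⟫_ℂ = ⟪Eop x - (ν : ℂ) • x, x⟫_ℂ + ⟪(ν : ℂ) • x, x⟫_ℂ := by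
        rw [← inner_add_left]
        congr 1
        abel
      have hterm1 : (⟪Eop x - (ν : ℂ) • x, x⟫_ℂ).re ≤ (e + e / ν) * r := by
        calc (⟪Eop x - (ν : ℂ) • x, x⟫_ℂ).re ≤ ‖⟪Eop x - (ν : ℂ) • x, x⟫_ℂ‖ :=
            Complex.re_le_norm _
        _ ≤ ‖Eop x - (ν : ℂ) • x‖ * ‖x‖ := norm_inner_le_norm _ _
        _ ≤ (e + e / ν) * r := mul_le_mul_of_nonneg_right est2 (norm_nonneg x)
      have hterm2 : (⟪(ν : ℂ) • x, x⟫_ℂ).re = ν * r ^ 2 := by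
        rw [inner_smul_left]
        rw [inner_self_eq_norm_sq_to_K]
        simp [Complex.conj_ofReal, ← Complex.ofReal_pow, ← Complex.ofReal_mul]
        exact Or.inl rfl
      rw [hsplit, Complex.add_re, hterm2]
      linarith [hterm1]
    have hteq : (e + e / ν) * r = (1 + 1/ν) * e * r := by ring
    nlinarith [hnormsq, hinner, hupper]
  -- (5b) upper bound on ‖(1-a) (d x)‖
  have est5b : ‖(1 - a) (d x)‖ ≤ (1 - ν) * r + (1 + 2/ν) * e := by
    have hp'd : (1 - a) (d x) = (1 - a) (b x) := by
      have h' := rid_p'd ha2 hb2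
      rw [← hd] at h'
      have := congrArg (fun (A : H →L[ℂ] H) => A x) h'
      simp only [ContinuousLinearMap.mul_apply] at this
      exact this
    have hbx : b x = b (a x) + b ((1 - a) x) := by
      have hxsplit : x = a x + (1 - a) x := by
        have : (1 - a) x = x - a x := rfl
        rw [this]
        abel
      conv_lhs => rw [hxsplit]
      rw [map_add]
    have hterm2 : ‖(1 - a) (b (a x))‖ ≤ e / ν :=
      le_trans (hnormp' _) (le_trans (hnormb _) est0')
    have hterm1 : ‖(1 - a) (b ((1 - a) x)) - ((1 - ν : ℝ) : ℂ) • x‖ ≤ e / ν + e := by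
      have hq : (1 - a) (b ((1 - a) x)) = (1 - a) x - C' x := by
        have hop' : (1 - a) * b * (1 - a) = (1 - a) - C' := by
          rw [hC']; exact rid_p'qp' ha2 hb2
        calc (1 - a) (b ((1 - a) x)) = ((1 - a) * b * (1 - a)) x := rfl
        _ = ((1 - a) - C') x := by rw [hop']
        _ = (1 - a) x - C' x := rfl
      rw [hq]
      have hrw : (1 - a) x - C' x - ((1 - ν : ℝ) : ℂ) • x
          = ((Z - C') x) - a x := by
        have h1' : (1 - a) x = x - a x := rfl
        have h2' : (Z - C') x = (ν : ℂ) • x - C' x := by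
          have : (Z - C') x = Z x - C' x := rfl
          rw [this, hZapp]
        rw [h1', h2']
        have : ((1 - ν : ℝ) : ℂ) • x = x - (ν : ℂ) • x := by
          have : ((1 - ν : ℝ) : ℂ) = 1 - (ν : ℂ) := by push_cast; ring
          rw [this, sub_smul, one_smul]
        rw [this]
        abel
      rw [hrw]
      calc ‖(Z - C') x - a x‖ ≤ ‖(Z - C') x‖ + ‖a x‖ := norm_sub_le _ _
      _ ≤ e + e / ν := add_le_add le_rfl est0'
      _ = e / ν + e := by ring
    have hnorm1ν : ‖((1 - ν : ℝ) : ℂ) • x‖ = (1 - ν) * r := by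
      rw [norm_smul, Complex.norm_real, Real.norm_eq_abs, abs_of_pos (by linarith)]
    calc ‖(1 - a) (d x)‖ = ‖(1 - a) (b x)‖ := by rw [hp'd]
    _ = ‖(1 - a) (b ((1 - a) x)) + (1 - a) (b (a x))‖ := by
        rw [hbx, map_add, add_comm]
    _ ≤ ‖(1 - a) (b ((1 - a) x))‖ + ‖(1 - a) (b (a x))‖ := norm_add_le _ _
    _ ≤ (‖((1 - ν : ℝ) : ℂ) • x‖ + (e / ν + e)) + e / ν := by
        have := norm_le_insert' ((1 - a) (b ((1 - a) x))) (((1 - ν : ℝ) : ℂ) • x)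
        have h'' : ‖(1 - a) (b ((1 - a) x))‖
            ≤ ‖((1 - ν : ℝ) : ℂ) • x‖ + ‖(1 - a) (b ((1 - a) x)) - ((1 - ν : ℝ) : ℂ) • x‖ :=
          norm_le_insert' _ _
        have h3'' := le_trans h'' (add_le_add le_rfl hterm1)
        exact add_le_add h3'' hterm2
    _ = (1 - ν) * r + (1 + 2/ν) * e := by
        rw [hnorm1ν]; ring
  -- (5) Pythagoras
  have hyu : ‖y‖ ^ 2 = ‖d x‖ ^ 2 - ‖(1 - a) (d x)‖ ^ 2 := by
    have := pyth hsa ha2 (d x)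
    have h' : (1 - a) (d x) = d x - a (d x) := rfl
    rw [h']
    rw [hy]
    linarith [this]
  -- combine
  exact real_combine (norm_nonneg x) hee (norm_nonneg y) (norm_nonneg (d x))
    (norm_nonneg ((1 - a) (d x))) hc₀ h0 h1 hyu est5a est5b hF1

lemma isUnit_of_coercive (T : H →L[ℂ] H) (hT : IsSelfAdjoint T) {c : ℝ} (hc : 0 < c)
    (h : ∀ x, c * ‖x‖ ^ 2 ≤ ‖⟪T x, x⟫_ℂ‖) : IsUnit T := by
  apply isUnit_of_bounded_below T hT hc
  intro x
  rcases eq_or_ne ‖x‖ 0 with h0 | h0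
  · rw [h0, mul_zero]; exact norm_nonneg _
  · have h1 := h x
    have h2 : ‖⟪T x, x⟫_ℂ‖ ≤ ‖T x‖ * ‖x‖ := norm_inner_le_norm _ _
    have hxpos : 0 < ‖x‖ := lt_of_le_of_ne (norm_nonneg x) (Ne.symm h0)
    nlinarith

end TwoProjAux

open TwoProjAux

theorem spectrum_diff_iff (F G : Submodule ℂ H) [CompleteSpace F] [CompleteSpace G]
    (hF0 : F ≠ ⊥) (hF1 : F ≠ ⊤) (hG0 : G ≠ ⊥) (hG1 : G ≠ ⊤)
    (lam : ℝ) (hlam : lam ∉ ({-1, 0, 1} : Set ℝ)) :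
    (lam : ℂ) ∈ spectrum ℂ (projOf G - projOf F) ↔
      ((1 - lam ^ 2 : ℝ) : ℂ) ∈ spectrum ℂ (projOf F * projOf G) := by
  simp only [Set.mem_insert_iff, Set.mem_singleton_iff, not_or] at hlam
  obtain ⟨hlm1, hl0, hl1⟩ := hlam
  obtain ⟨x0, hx0F, hx00⟩ := F.ne_bot_iff.mp hF0
  haveI : Nontrivial H := ⟨⟨x0, 0, hx00⟩⟩
  set a := projOf F with hA
  set b := projOf G with hB
  have ha2 : a * a = a := by
    ext w
    simp [hA, projOf, ContinuousLinearMap.mul_apply,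
      Submodule.starProjection_eq_self_iff, Submodule.starProjection_apply_mem]
  have hb2 : b * b = b := by
    ext w
    simp [hB, projOf, ContinuousLinearMap.mul_apply,
      Submodule.starProjection_eq_self_iff, Submodule.starProjection_apply_mem]
  have hsa : IsSelfAdjoint a := isSelfAdjoint_starProjection F
  have hsb : IsSelfAdjoint b := isSelfAdjoint_starProjection G
  have hsd : IsSelfAdjoint (b - a) := hsb.sub hsa
  have hsq_ne : lam ^ 2 ≠ 1 := by
    intro h'
    have h'' : (lam - 1) * (lam + 1) = 0 := by nlinarith
    rcases mul_eq_zero.mp h'' with h3 | h3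
    · exact hl1 (by linarith)
    · exact hlm1 (by linarith)
  have hν0 : ((1 - lam ^ 2 : ℝ) : ℂ) ≠ 0 := by
    rw [Complex.ofReal_ne_zero]
    intro h'
    exact hsq_ne (by linarith)
  have hνeq : ((1 - lam ^ 2 : ℝ) : ℂ) = 1 - ((lam : ℝ) : ℂ) ^ 2 := by push_cast; ring
  have hnormd : ∀ x : H, ‖(b - a) x‖ ≤ ‖x‖ := by
    intro x
    nlinarith [norm_identity ha2 hb2 hsa hsb x, norm_nonneg ((b - a) x), norm_nonneg x,
      sq_nonneg (‖(a + b - 1) x‖)]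
  rcases lt_or_gt_of_ne hsq_ne with hlt | hgt
  · -- lam² < 1 : the main equivalence
    have hsqpos : 0 < lam ^ 2 :=
      lt_of_le_of_ne (sq_nonneg lam) (Ne.symm (pow_ne_zero _ hl0))
    have hνpos : 0 < 1 - lam ^ 2 := by linarith
    have hνlt1 : 1 - lam ^ 2 < 1 := by linarith
    have step_sym : (lam : ℂ) ∈ spectrum ℂ (b - a)
        ↔ (((lam : ℝ) : ℂ) ∈ spectrum ℂ (b - a) ∨ -((lam : ℝ) : ℂ) ∈ spectrum ℂ (b - a)) := by
      constructor
      · exact Or.inl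
      · rintro (h' | h')
        · exact h'
        · by_contra hno
          rw [spectrum.mem_iff, not_not] at hno
          -- hno : IsUnit (algebraMap (lam) - (b-a))
          have hcast : -(((-lam : ℝ)) : ℂ) = ((lam : ℝ) : ℂ) := by push_cast; ring
          have h2 := sym_lemma a b ha2 hb2 hsa hsb (-lam) (by nlinarith)
            (by rw [hcast]; exact hno)
          rw [spectrum.mem_iff] at h'
          apply h'
          have hcast2 : (((-lam : ℝ)) : ℂ) = -((lam : ℝ) : ℂ) := by push_cast; ring
          rwa [hcast2] at h2
    have step_sq : (((lam : ℝ) : ℂ) ∈ spectrum ℂ (b - a) ∨ -((lam : ℝ) : ℂ) ∈ spectrum ℂ (b - a))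
        ↔ ((lam : ℝ) : ℂ) ^ 2 ∈ spectrum ℂ ((b - a) * (b - a)) :=
      (mem_sq_iff _ _).symm
    have step_master : ((lam : ℝ) : ℂ) ^ 2 ∈ spectrum ℂ ((b - a) * (b - a))
        ↔ (((1 - lam ^ 2 : ℝ) : ℂ) ∈ spectrum ℂ (a * b * a)
            ∨ ((1 - lam ^ 2 : ℝ) : ℂ) ∈ spectrum ℂ ((1 - a) * (1 - b) * (1 - a))) :=
      (spectrum_master ha2 hb2 hνeq hν0).symm
    have step_tr : (((1 - lam ^ 2 : ℝ) : ℂ) ∈ spectrum ℂ (a * b * a)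
            ∨ ((1 - lam ^ 2 : ℝ) : ℂ) ∈ spectrum ℂ ((1 - a) * (1 - b) * (1 - a)))
        ↔ ((1 - lam ^ 2 : ℝ) : ℂ) ∈ spectrum ℂ (a * b * a) := by
      constructor
      · rintro (h' | h')
        · exact h'
        · by_contra hno
          rw [spectrum.mem_iff, not_not] at hno
          have h2 := transfer_lemma a b ha2 hb2 hsa hsb (1 - lam ^ 2) hνpos hνlt1 hno
          rw [spectrum.mem_iff] at h'
          exact h' h2
      · exact Or.inl
    have step_swap : ((1 - lam ^ 2 : ℝ) : ℂ) ∈ spectrum ℂ (a * b * a)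
        ↔ ((1 - lam ^ 2 : ℝ) : ℂ) ∈ spectrum ℂ (a * b) :=
      mem_aba_iff_ab ha2 hν0
    exact step_sym.trans (step_sq.trans (step_master.trans (step_tr.trans step_swap)))
  · -- lam² > 1 : both sides are false
    have habs : 1 < |lam| := by nlinarith [abs_nonneg lam, sq_abs lam]
    have hLHS : (lam : ℂ) ∉ spectrum ℂ (b - a) := by
      rw [spectrum.mem_iff, not_not]
      apply isUnit_of_coercive _ ((scalar_selfadj lam).sub hsd) (c := |lam| - 1) (by linarith)
      intro x
      have happ : (algebraMap ℂ (H →L[ℂ] H) ((lam : ℝ) : ℂ) - (b - a)) x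
          = ((lam : ℝ) : ℂ) • x - (b - a) x := by
        rw [ContinuousLinearMap.sub_apply, scalar_apply]
      have hre : (⟪(algebraMap ℂ (H →L[ℂ] H) ((lam : ℝ) : ℂ) - (b - a)) x, x⟫_ℂ).re
          = lam * ‖x‖ ^ 2 - (⟪(b - a) x, x⟫_ℂ).re := by
        rw [happ, inner_sub_left, Complex.sub_re]
        congr 1
        rw [inner_smul_left, inner_self_eq_norm_sq_to_K]
        simp [Complex.conj_ofReal, ← Complex.ofReal_pow, ← Complex.ofReal_mul]
      have hdbound : |(⟪(b - a) x, x⟫_ℂ).re| ≤ ‖x‖ ^ 2 := by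
        calc |(⟪(b - a) x, x⟫_ℂ).re| ≤ ‖⟪(b - a) x, x⟫_ℂ‖ := Complex.abs_re_le_norm _
        _ ≤ ‖(b - a) x‖ * ‖x‖ := norm_inner_le_norm _ _
        _ ≤ ‖x‖ * ‖x‖ := mul_le_mul_of_nonneg_right (hnormd x) (norm_nonneg x)
        _ = ‖x‖ ^ 2 := (sq ‖x‖).symm
      calc (|lam| - 1) * ‖x‖ ^ 2
          ≤ |lam * ‖x‖ ^ 2| - |(⟪(b - a) x, x⟫_ℂ).re| := by
            rw [abs_mul, abs_of_nonneg (sq_nonneg ‖x‖)]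
            nlinarith [abs_nonneg lam]
      _ ≤ |lam * ‖x‖ ^ 2 - (⟪(b - a) x, x⟫_ℂ).re| := abs_sub_abs_le_abs_sub _ _
      _ = |(⟪(algebraMap ℂ (H →L[ℂ] H) ((lam : ℝ) : ℂ) - (b - a)) x, x⟫_ℂ).re| := by
            rw [hre]
      _ ≤ ‖⟪(algebraMap ℂ (H →L[ℂ] H) ((lam : ℝ) : ℂ) - (b - a)) x, x⟫_ℂ‖ :=
            Complex.abs_re_le_norm _
    have hsaba : IsSelfAdjoint (a * b * a) := by
      have h' := hsb.conjugate a
      rwa [hsa.star_eq] at h'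
    have hZCsa : IsSelfAdjoint
        (algebraMap ℂ (H →L[ℂ] H) ((1 - lam ^ 2 : ℝ) : ℂ) - a * b * a) :=
      (scalar_selfadj (1 - lam ^ 2)).sub hsaba
    have hRHS : ((1 - lam ^ 2 : ℝ) : ℂ) ∉ spectrum ℂ (a * b) := by
      rw [← mem_aba_iff_ab ha2 hν0]
      rw [spectrum.mem_iff, not_not]
      apply isUnit_of_coercive _ hZCsa (c := lam ^ 2 - 1) (by linarith)
      intro x
      have happ : (algebraMap ℂ (H →L[ℂ] H) ((1 - lam ^ 2 : ℝ) : ℂ) - a * b * a) x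
          = ((1 - lam ^ 2 : ℝ) : ℂ) • x - (a * b * a) x := by
        rw [ContinuousLinearMap.sub_apply, scalar_apply]
      have hreC : (⟪(a * b * a) x, x⟫_ℂ).re = ‖b (a x)‖ ^ 2 := by
        have h1' : (a * b * a) x = a (b (a x)) := rfl
        rw [h1', inner_selfadj hsa]
        exact re_inner_idem hsb hb2 (a x)
      have hre : (⟪(algebraMap ℂ (H →L[ℂ] H) ((1 - lam ^ 2 : ℝ) : ℂ) - a * b * a) x, x⟫_ℂ).re
          = (1 - lam ^ 2) * ‖x‖ ^ 2 - ‖b (a x)‖ ^ 2 := by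
        rw [happ, inner_sub_left, Complex.sub_re, hreC]
        congr 1
        rw [inner_smul_left, inner_self_eq_norm_sq_to_K]
        simp [Complex.conj_ofReal, ← Complex.ofReal_pow, ← Complex.ofReal_mul]
      calc (lam ^ 2 - 1) * ‖x‖ ^ 2
          ≤ -((1 - lam ^ 2) * ‖x‖ ^ 2 - ‖b (a x)‖ ^ 2) := by nlinarith [sq_nonneg (‖b (a x)‖)]
      _ ≤ |(1 - lam ^ 2) * ‖x‖ ^ 2 - ‖b (a x)‖ ^ 2| := neg_le_abs _
      _ = |(⟪(algebraMap ℂ (H →L[ℂ] H) ((1 - lam ^ 2 : ℝ) : ℂ) - a * b * a) x, x⟫_ℂ).re| := by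
            rw [hre]
      _ ≤ ‖⟪(algebraMap ℂ (H →L[ℂ] H) ((1 - lam ^ 2 : ℝ) : ℂ) - a * b * a) x, x⟫_ℂ‖ :=
            Complex.abs_re_le_norm _
    exact iff_of_false hLHS hRHS
end

section
/- For nontrivial orthogonal projectors P_F, P_G on a Hilbert space, the spectrum of P_F + P_G, except possibly the point 0, lies in the closed interval [1 − ‖P_F P_G‖, 1 + ‖P_F P_G‖]. -/
open ContinuousLinearMap

variable {H : Type*} [NormedAddCommGroup H] [InnerProductSpace ℂ H] [CompleteSpace H]

lemma symm_inner (P : H →L[ℂ] H) (hP : IsSelfAdjoint P) (u v : H) :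
    (inner ℂ (P u) v : ℂ) = inner ℂ u (P v) :=
  (isSelfAdjoint_iff_isSymmetric.mp hP) u v

lemma inner_idem (P : H →L[ℂ] H) (hPid : P*P = P) (hP : IsSelfAdjoint P) (x : H) :
    inner ℂ (P x) x = ((‖P x‖^2 : ℝ) : ℂ) := by
  have h1 : P x = P (P x) := by
    conv_lhs => rw [← hPid]
    rfl
  rw [h1, symm_inner P hP (P x) x, ← h1, inner_self_eq_norm_sq_to_K]
  norm_cast

lemma isPositive_of_idem (P : H →L[ℂ] H) (hPid : P*P = P) (hP : IsSelfAdjoint P) :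
    P.IsPositive := by
  refine isPositive_def'.mpr ⟨hP, fun x => ?_⟩
  rw [reApplyInnerSelf_apply, inner_idem P hPid hP]
  exact le_of_le_of_eq (sq_nonneg ‖P x‖) (RCLike.ofReal_re _).symm

lemma key_pos (P Q : H →L[ℂ] H) (hPid : P*P = P) (hP : IsSelfAdjoint P)
    (hQid : Q*Q = Q) (hQ : IsSelfAdjoint Q) :
    (((‖Q*P‖^2 : ℝ) : ℂ) • P - P*Q*P).IsPositive := by
  rw [isPositive_def']
  constructor
  · rw [IsSelfAdjoint, star_sub, star_smul, star_mul, star_mul, hP.star_eq, hQ.star_eq]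
    rw [Complex.star_def, Complex.conj_ofReal, mul_assoc]
  · intro x
    have h2 : inner ℂ ((P*Q*P) x) x = ((‖Q (P x)‖^2 : ℝ) : ℂ) := by
      have e : (P*Q*P) x = P (Q (P x)) := rfl
      rw [e, symm_inner P hP (Q (P x)) x, ← inner_idem Q hQid hQ (P x)]
    have h3 : ‖Q (P x)‖ ≤ ‖Q*P‖ * ‖P x‖ := by
      have e : Q (P x) = (Q*P) (P x) := by
        show Q (P x) = Q (P (P x))
        rw [show P (P x) = (P*P) x from rfl, hPid]
      rw [e]; exact le_opNorm _ _
    have h4 : reApplyInnerSelf (((‖Q*P‖^2 : ℝ) : ℂ) • P - P*Q*P) x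
        = ‖Q*P‖^2 * ‖P x‖^2 - ‖Q (P x)‖^2 := by
      rw [reApplyInnerSelf_apply]
      rw [sub_apply, smul_apply, inner_sub_left, inner_smul_left, inner_idem P hPid hP, h2,
        Complex.conj_ofReal, ← Complex.ofReal_mul, ← Complex.ofReal_sub]
      exact RCLike.ofReal_re _
    rw [h4]
    nlinarith [norm_nonneg (Q (P x)), norm_nonneg (P x), norm_nonneg (Q*P)]

lemma sum_mul_sq_sub_one (P Q : H →L[ℂ] H) (hPid : P*P = P) (hQid : Q*Q = Q) :
    (P+Q)*((P+Q)-1)^2 = P*Q*P + Q*P*Q := by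
  have hPa : ∀ a : H →L[ℂ] H, P*(P*a) = P*a := fun a => by rw [← mul_assoc, hPid]
  have hQa : ∀ a : H →L[ℂ] H, Q*(Q*a) = Q*a := fun a => by rw [← mul_assoc, hQid]
  have h2 : P*Q*P + Q*P*Q = P*(Q*P) + Q*(P*Q) := by rw [mul_assoc, mul_assoc]
  rw [h2]
  noncomm_ring
  simp only [hPid, hQid, hPa, hQa]
  abel

theorem spectrum_sum_subset_interval (F G : Submodule ℂ H)
    [CompleteSpace F] [CompleteSpace G] (hF0 : F ≠ ⊥) (hG0 : G ≠ ⊥) :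
    ∀ z ∈ spectrum ℂ (projOf F + projOf G), z ≠ 0 →
      ∃ x : ℝ, z = (x : ℂ) ∧
        1 - ‖projOf F * projOf G‖ ≤ x ∧ x ≤ 1 + ‖projOf F * projOf G‖ := by
  intro z hz hz0
  set P := projOf F with hPdef
  set Q := projOf G with hQdef
  have hPid : P*P = P := projOf_idem F
  have hQid : Q*Q = Q := projOf_idem G
  have hP : IsSelfAdjoint P := isSelfAdjoint_starProjection F
  have hQ : IsSelfAdjoint Q := isSelfAdjoint_starProjection G
  have hT : IsSelfAdjoint (P + Q) := hP.add hQ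
  have hzre : z = (z.re : ℂ) := hT.mem_spectrum_eq_re hz
  set c : ℝ := ‖P * Q‖ with hc
  set x : ℝ := z.re with hx
  have hc0 : 0 ≤ c := norm_nonneg _
  have hxmem : x ∈ spectrum ℝ (P + Q) := by
    apply spectrum.of_algebraMap_mem ℂ
    show ((x : ℝ) : ℂ) ∈ _
    rwa [← hzre]
  have hTpos : (0 : H →L[ℂ] H) ≤ P + Q :=
    (nonneg_iff_isPositive _).mpr
      ((isPositive_of_idem P hPid hP).add (isPositive_of_idem Q hQid hQ))
  have hx0 : 0 ≤ x := spectrum_nonneg_of_nonneg hTpos hxmem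
  have hxpos : 0 < x := by
    rcases hx0.lt_or_eq with h | h
    · exact h
    · exact absurd (by rw [hzre, ← h]; simp) hz0
  have hQP : ‖Q * P‖ = c := by
    rw [hc, ← norm_star (P*Q), star_mul, hP.star_eq, hQ.star_eq]
  have hN1 : (((c^2 : ℝ) : ℂ) • P - P*Q*P).IsPositive := by
    rw [← hQP]; exact key_pos P Q hPid hP hQid hQ
  have hN2 : (((c^2 : ℝ) : ℂ) • Q - Q*P*Q).IsPositive := by
    rw [hc]; exact key_pos Q P hQid hQ hPid hP
  set p : Polynomial ℂ :=
    Polynomial.X * (Polynomial.X - 1)^2 - Polynomial.C ((c^2 : ℝ) : ℂ) * Polynomial.X with hp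
  have hmem : ((x*(x-1)^2 - c^2*x : ℝ) : ℂ) ∈ spectrum ℂ (Polynomial.aeval (P+Q) p) := by
    apply spectrum.subset_polynomial_aeval
    refine ⟨z, hz, ?_⟩
    rw [hzre]
    simp only [hp, Polynomial.eval_sub, Polynomial.eval_mul, Polynomial.eval_pow,
      Polynomial.eval_X, Polynomial.eval_C, Polynomial.eval_one]
    push_cast
    ring
  have haeval : Polynomial.aeval (P+Q) p
      = -((((c^2 : ℝ) : ℂ) • P - P*Q*P) + (((c^2 : ℝ) : ℂ) • Q - Q*P*Q)) := by
    have hTT := sum_mul_sq_sub_one P Q hPid hQid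
    simp only [hp, map_sub, map_mul, map_pow, Polynomial.aeval_X, Polynomial.aeval_C,
      map_one, map_add]
    rw [← Algebra.smul_def, hTT, smul_add]
    abel
  have hBneg : (0 : H →L[ℂ] H) ≤ -(Polynomial.aeval (P+Q) p) := by
    rw [haeval, neg_neg]
    exact (nonneg_iff_isPositive _).mpr (hN1.add hN2)
  have hw : (x*(x-1)^2 - c^2*x : ℝ) ∈ spectrum ℝ (Polynomial.aeval (P+Q) p) :=
    spectrum.of_algebraMap_mem ℂ hmem
  have hwneg : -(x*(x-1)^2 - c^2*x) ∈ spectrum ℝ (-(Polynomial.aeval (P+Q) p)) := by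
    rw [← spectrum.neg_eq]
    exact Set.neg_mem_neg.mpr hw
  have hge : 0 ≤ -(x*(x-1)^2 - c^2*x) := spectrum_nonneg_of_nonneg hBneg hwneg
  have hsq : (x-1)^2 ≤ c^2 := by nlinarith
  exact ⟨x, hzre, by nlinarith, by nlinarith⟩
end

section
/- Let U ⊆ F and V ⊆ G be closed subspaces with P_F V ⊆ U and P_G U ⊆ V (a pair of principal invariant subspaces). Then U is an invariant subspace of P_F P_G (i.e., P_F P_G U ⊆ U), and V ⊖ closure(P_G U) ⊆ G ∩ F⊥. -/
open ContinuousLinearMap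

variable {H : Type*} [NormedAddCommGroup H] [InnerProductSpace ℂ H] [CompleteSpace H]

theorem principal_invariant_subspaces_invariant (F G U V : Submodule ℂ H)
    [CompleteSpace F] [CompleteSpace G]
    (hUF : U ≤ F) (hVG : V ≤ G)
    (hU : IsClosed (U : Set H)) (hV : IsClosed (V : Set H))
    (hPF : ∀ v ∈ V, projOf F v ∈ U) (hPG : ∀ u ∈ U, projOf G u ∈ V) :
    (∀ u ∈ U, (projOf F * projOf G) u ∈ U) ∧
      V ⊓ ((U.map ((projOf G : H →L[ℂ] H) : H →ₗ[ℂ] H)).topologicalClosure)ᗮ ≤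
        G ⊓ Fᗮ := by
  constructor
  · intro u hu
    exact hPF _ (hPG u hu)
  · rintro v ⟨hvV, hvO⟩
    refine ⟨hVG hvV, ?_⟩
    have hvG : (G.orthogonalProjectionOnto v : H) = v :=
      Submodule.starProjection_eq_self_iff.2 (hVG hvV)
    -- P_F v ∈ U
    have hPFv : projOf F v ∈ U := hPF v hvV
    have hmem : projOf G (projOf F v) ∈
        (U.map ((projOf G : H →L[ℂ] H) : H →ₗ[ℂ] H)).topologicalClosure :=
      Submodule.le_topologicalClosure _ ⟨projOf F v, hPFv, rfl⟩
    have h0 : (inner ℂ (projOf G (projOf F v)) v : ℂ) = 0 := hvO _ hmem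
    have h1 : (inner ℂ v (projOf F v) : ℂ) = 0 := by
      have := Submodule.inner_starProjection_left_eq_right G v (projOf F v)
      simp only [projOf, coe_comp', Function.comp_apply, Submodule.coe_subtypeL',
        Submodule.coe_subtype, Submodule.starProjection_apply] at this h0 ⊢
      rw [hvG] at this
      rw [this]
      have := congrArg (starRingEnd ℂ) h0
      simpa [projOf, inner_conj_symm] using this
    have h2 : (inner ℂ (projOf F v) (projOf F v) : ℂ) = 0 := by
      have := Submodule.inner_starProjection_left_eq_right F v (projOf F v)
      simp only [projOf, coe_comp', Function.comp_apply, Submodule.coe_subtypeL',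
        Submodule.coe_subtype, Submodule.starProjection_apply] at this h1 ⊢
      rw [Submodule.orthogonalProjectionOnto_mem_subspace_eq_self] at this
      rw [this]
      exact h1
    have : projOf F v = 0 := inner_self_eq_zero.mp h2
    have h3 : (F.orthogonalProjectionOnto v : H) = 0 := by
      simpa [projOf] using this
    exact Submodule.orthogonalProjectionOnto_eq_zero_iff.mp (Submodule.coe_eq_zero.mp h3)
end
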